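/- Let l_1, ..., l_N : ℝ → ℝ be strictly convex with unique minimizers, and let z* be the unique minimizer of Σ l_n(z_n) over nondecreasing sequences. Then z* is a staircase: {1,...,N} partitions into consecutive blocks on which z* is constant, and on each block B the common value equals argmin of Σ_{n∈B} l_n, with the block values strictly increasing across blocks. -/

import Mathlib

open Finset

/-- the unique isotonic minimizer of a sum of strictly convex
per-sample losses is a staircase: the indices partition into consecutive
blocks on which it is constant, the common value on each block is the unique
minimizer of the block's total loss, and the block values strictly increase. -/
theorem stmt_18 (N : ℕ) (l : Fin N → ℝ → ℝ)
    (hconv : ∀ n, StrictConvexOn ℝ Set.univ (l n))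
    (hattain : ∀ s : Finset (Fin N), s.Nonempty →
      ∃! y : ℝ, ∀ z : ℝ, (∑ n ∈ s, l n y) ≤ ∑ n ∈ s, l n z)
    (zstar : Fin N → ℝ) (hmono : Monotone zstar)
    (hmin : ∀ z : Fin N → ℝ, Monotone z →
      (∑ n, l n (zstar n)) ≤ ∑ n, l n (z n))
    (huniq : ∀ z : Fin N → ℝ, Monotone z →
      (∀ w : Fin N → ℝ, Monotone w → (∑ n, l n (z n)) ≤ ∑ n, l n (w n)) →
      z = zstar) :
    ∃ (I : ℕ) (b : Fin (I + 1) → ℕ) (v : Fin I → ℝ),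
      StrictMono b ∧ b 0 = 0 ∧ b (Fin.last I) = N ∧ StrictMono v ∧
      (∀ (i : Fin I) (n : Fin N),
        b i.castSucc ≤ n.val → n.val < b i.succ → zstar n = v i) ∧
      (∀ i : Fin I, ∀ w : ℝ,
        (∑ n ∈ Finset.univ.filter
            (fun n : Fin N => b i.castSucc ≤ n.val ∧ n.val < b i.succ),
          l n (v i)) ≤
        ∑ n ∈ Finset.univ.filter
            (fun n : Fin N => b i.castSucc ≤ n.val ∧ n.val < b i.succ),
          l n w) := by
  classical
  set S : Finset ℝ := Finset.image zstar Finset.univ with hS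
  set I : ℕ := S.card with hI
  let e : Fin I ≃o {x // x ∈ S} := S.orderIsoOfFin rfl
  have hmem : ∀ n : Fin N, zstar n ∈ S := fun n =>
    Finset.mem_image_of_mem _ (Finset.mem_univ n)
  set r : Fin N → Fin I := fun n => e.symm ⟨zstar n, hmem n⟩ with hr
  set v : Fin I → ℝ := fun i => (e i : ℝ) with hv
  have hvr : ∀ n, v (r n) = zstar n := fun n => by
    simp [hv, hr]
  have hvS : StrictMono v := fun a b h => e.strictMono h
  have hrmono : Monotone r := fun m n h => by
    have h1 : (⟨zstar m, hmem m⟩ : {x // x ∈ S}) ≤ ⟨zstar n, hmem n⟩ := hmono h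
    exact e.symm.monotone h1
  set b : Fin (I+1) → ℕ :=
    fun j => (Finset.univ.filter (fun n : Fin N => (r n : ℕ) < (j : ℕ))).card with hb
  -- key cardinality facts
  have h1 : ∀ (j : Fin (I+1)) (n : Fin N), (r n : ℕ) < (j : ℕ) → n.val < b j := by
    intro j n hn
    have hsub : Finset.Iic n ⊆ Finset.univ.filter (fun m : Fin N => (r m : ℕ) < (j : ℕ)) := by
      intro m hm
      rw [Finset.mem_Iic] at hm
      refine Finset.mem_filter.2 ⟨Finset.mem_univ m, ?_⟩
      exact lt_of_le_of_lt (Nat.le_of_lt_succ (Nat.lt_succ_of_le (hrmono hm))) hn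
    have := Finset.card_le_card hsub
    rw [Fin.card_Iic] at this
    simp only [hb]
    omega
  have h2 : ∀ (j : Fin (I+1)) (n : Fin N), (j : ℕ) ≤ (r n : ℕ) → b j ≤ n.val := by
    intro j n hn
    have hsub : Finset.univ.filter (fun m : Fin N => (r m : ℕ) < (j : ℕ)) ⊆ Finset.Iio n := by
      intro m hm
      rw [Finset.mem_filter] at hm
      rw [Finset.mem_Iio]
      by_contra hc
      push_neg at hc
      have := hrmono hc
      omega
    have := Finset.card_le_card hsub
    rw [Fin.card_Iio] at this
    simp only [hb]
    omega
  have hblock : ∀ (i : Fin I) (n : Fin N),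
      (b i.castSucc ≤ n.val ∧ n.val < b i.succ) ↔ r n = i := by
    intro i n
    constructor
    · rintro ⟨hl, hrt⟩
      by_contra hne
      rcases lt_or_gt_of_ne (fun h : (r n : ℕ) = (i : ℕ) => hne (Fin.ext h)) with hlt | hgt
      · have := h1 i.castSucc n (by simpa using hlt)
        omega
      · have := h2 i.succ n (by simpa [Fin.val_succ] using hgt)
        omega
    · intro hrn
      constructor
      · exact h2 i.castSucc n (by simp [hrn])
      · exact h1 i.succ n (by simp [hrn, Fin.val_succ])
  have hrveq : ∀ (n : Fin N) (i : Fin I), r n = i ↔ zstar n = v i := by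
    intro n i
    constructor
    · intro h; rw [← hvr n, h]
    · intro h; apply hvS.injective; rw [hvr n, h]
  -- block as a level set
  have hsetseq : ∀ i : Fin I,
      Finset.univ.filter (fun n : Fin N => b i.castSucc ≤ n.val ∧ n.val < b i.succ)
        = Finset.univ.filter (fun n : Fin N => zstar n = v i) := by
    intro i
    apply Finset.filter_congr
    intro n _
    rw [hblock i n]
    exact hrveq n i
  -- b is a strict mono staircase
  have hbmono : StrictMono b := by
    rw [Fin.strictMono_iff_lt_succ]
    intro i
    have hvi : v i ∈ S := (e i).2
    rw [hS, Finset.mem_image] at hvi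
    obtain ⟨n, -, hn⟩ := hvi
    have hri : r n = i := (hrveq n i).2 hn
    have := (hblock i n).2 hri
    omega
  have hb0 : b 0 = 0 := by
    rw [hb]
    convert Finset.card_empty
    apply Finset.filter_false_of_mem
    intro n _
    simp
  have hbN : b (Fin.last I) = N := by
    simp only [hb]
    have : Finset.univ.filter (fun n : Fin N => (r n : ℕ) < ((Fin.last I : Fin (I+1)) : ℕ))
        = Finset.univ := by
      apply Finset.filter_true_of_mem
      intro n _
      simpa using (r n).isLt
    rw [this, Finset.card_univ, Fintype.card_fin]

  -- main minimization property on blocks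
  have hminblock : ∀ i : Fin I, ∀ w : ℝ,
      (∑ n ∈ Finset.univ.filter (fun n : Fin N => zstar n = v i), l n (v i)) ≤
      ∑ n ∈ Finset.univ.filter (fun n : Fin N => zstar n = v i), l n w := by
    intro i
    set B := Finset.univ.filter (fun n : Fin N => zstar n = v i) with hBdef
    have hBne : B.Nonempty := by
      have hvi : v i ∈ S := (e i).2
      rw [hS, Finset.mem_image] at hvi
      obtain ⟨n, -, hn⟩ := hvi
      exact ⟨n, Finset.mem_filter.2 ⟨Finset.mem_univ n, hn⟩⟩
    obtain ⟨y, hy, hyuniq⟩ := hattain B hBne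
    by_cases hyv : y = v i
    · rw [← hyv]; exact hy
    · exfalso
      have hsv : ¬ ∀ z, (∑ n ∈ B, l n (v i)) ≤ ∑ n ∈ B, l n z := by
        intro h
        exact hyv (hyuniq _ h).symm
      push_neg at hsv
      obtain ⟨z0, hz0⟩ := hsv
      have hsy : (∑ n ∈ B, l n y) < ∑ n ∈ B, l n (v i) := lt_of_le_of_lt (hy z0) hz0
      set C := Finset.univ.filter (fun n : Fin N => zstar n ≠ v i) with hCdef
      set ε : ℝ := if h : C.Nonempty then C.inf' h (fun n => |zstar n - v i|) else 1 with hεdef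
      have hεpos : 0 < ε := by
        rw [hεdef]
        split_ifs with h
        · rw [Finset.lt_inf'_iff]
          intro n hn
          rw [hCdef, Finset.mem_filter] at hn
          exact abs_pos.2 (sub_ne_zero.2 hn.2)
        · norm_num
      have hεle : ∀ n : Fin N, zstar n ≠ v i → ε ≤ |zstar n - v i| := by
        intro n hn
        have hnC : n ∈ C := Finset.mem_filter.2 ⟨Finset.mem_univ n, hn⟩
        rw [hεdef]
        rw [dif_pos ⟨n, hnC⟩]
        exact Finset.inf'_le _ hnC
      have hypos : 0 < |y - v i| := abs_pos.2 (sub_ne_zero.2 hyv)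
      set t : ℝ := min 1 (ε / (2 * |y - v i|)) with htdef
      have ht0 : 0 < t := lt_min one_pos (div_pos hεpos (by linarith))
      have ht1 : t ≤ 1 := min_le_left _ _
      have htb : t * |y - v i| < ε := by
        have h2 : t ≤ ε / (2 * |y - v i|) := min_le_right _ _
        have : t * |y - v i| ≤ (ε / (2 * |y - v i|)) * |y - v i| := by
          apply mul_le_mul_of_nonneg_right h2 (le_of_lt hypos)
        have heq : (ε / (2 * |y - v i|)) * |y - v i| = ε / 2 := by
          field_simp
        rw [heq] at this
        linarith
      set c : ℝ := v i + t * (y - v i) with hcdef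
      have hcdist : |c - v i| < ε := by
        rw [hcdef]
        have : v i + t * (y - v i) - v i = t * (y - v i) := by ring
        rw [this, abs_mul, abs_of_pos ht0]
        exact htb
      -- convexity bound
      have hlc : ∀ n : Fin N, l n c ≤ (1 - t) * l n (v i) + t * l n y := by
        intro n
        have hcc : c = (1 - t) • (v i) + t • y := by
          simp only [smul_eq_mul]
          rw [hcdef]; ring
        rw [hcc]
        exact (hconv n).convexOn.2 (Set.mem_univ _) (Set.mem_univ _)
          (by linarith) (le_of_lt ht0) (by ring)
      have hcsum : (∑ n ∈ B, l n c) < ∑ n ∈ B, l n (v i) := by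
        calc (∑ n ∈ B, l n c) ≤ ∑ n ∈ B, ((1 - t) * l n (v i) + t * l n y) :=
              Finset.sum_le_sum (fun n _ => hlc n)
          _ = (1 - t) * (∑ n ∈ B, l n (v i)) + t * (∑ n ∈ B, l n y) := by
              rw [Finset.sum_add_distrib, Finset.mul_sum, Finset.mul_sum]
          _ < (1 - t) * (∑ n ∈ B, l n (v i)) + t * (∑ n ∈ B, l n (v i)) := by
              have := mul_lt_mul_of_pos_left hsy ht0
              linarith
          _ = ∑ n ∈ B, l n (v i) := by ring
      -- the perturbed sequence
      set zt : Fin N → ℝ := fun n => if zstar n = v i then c else zstar n with hztdef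
      have hztmono : Monotone zt := by
        intro m n hmn
        simp only [hztdef]
        by_cases hm : zstar m = v i <;> by_cases hn : zstar n = v i <;>
          simp [hm, hn]
        · -- m in block, n not: v i < zstar n
          have hle : v i ≤ zstar n := hm ▸ hmono hmn
          have hlt : v i < zstar n := lt_of_le_of_ne hle (fun h => hn h.symm)
          have hε' : ε ≤ zstar n - v i := by
            have := hεle n hn
            rwa [abs_of_pos (by linarith)] at this
          have : c - v i < ε := lt_of_abs_lt hcdist
          linarith
        · -- m not in block, n in block: zstar m < v i
          have hle : zstar m ≤ v i := hn ▸ hmono hmn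
          have hlt : zstar m < v i := lt_of_le_of_ne hle hm
          have hε' : ε ≤ v i - zstar m := by
            have := hεle m hm
            rw [abs_sub_comm] at this
            rwa [abs_of_pos (by linarith)] at this
          have h' := (abs_lt.1 hcdist).1
          linarith
        · exact hmono hmn
      have hcontr := hmin zt hztmono
      have hsplit1 : (∑ n, l n (zt n)) =
          (∑ n ∈ B, l n c) + ∑ n ∈ Finset.univ.filter (fun n : Fin N => ¬ zstar n = v i),
            l n (zstar n) := by
        rw [← Finset.sum_filter_add_sum_filter_not Finset.univ
          (fun n : Fin N => zstar n = v i) (fun n => l n (zt n))]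
        congr 1
        · apply Finset.sum_congr rfl
          intro n hn
          rw [Finset.mem_filter] at hn
          simp [hztdef, hn.2]
        · apply Finset.sum_congr rfl
          intro n hn
          rw [Finset.mem_filter] at hn
          simp [hztdef, hn.2]
      have hsplit2 : (∑ n, l n (zstar n)) =
          (∑ n ∈ B, l n (v i)) + ∑ n ∈ Finset.univ.filter (fun n : Fin N => ¬ zstar n = v i),
            l n (zstar n) := by
        rw [← Finset.sum_filter_add_sum_filter_not Finset.univ
          (fun n : Fin N => zstar n = v i) (fun n => l n (zstar n))]
        congr 1
        apply Finset.sum_congr rfl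
        intro n hn
        rw [Finset.mem_filter] at hn
        rw [hn.2]
      rw [hsplit1, hsplit2] at hcontr
      linarith
  refine ⟨I, b, v, hbmono, hb0, hbN, hvS, ?_, ?_⟩
  · intro i n hbl hbr
    have hri : r n = i := (hblock i n).1 ⟨hbl, hbr⟩
    rw [← hri, hvr]
  · intro i w
    rw [hsetseq i]
    exact hminblock i w
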